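/- For every ε > 0 there exists M₀ such that for every integer M ≥ M₀ there is a subset A of {0,1,…,M−1} with |A| ≥ M^{1−ε} that contains no nontrivial three-term arithmetic progression modulo M: whenever a, b, c ∈ A satisfy a + c ≡ 2b (mod M), one has a = b = c. -/

import Mathlib

open Real Filter

lemma aux_tendsto (ε : ℝ) (hε : 0 < ε) :
    Tendsto (fun x : ℝ => ε * x - 4 * Real.sqrt x) atTop atTop := by
  have hs : Tendsto Real.sqrt atTop atTop := by
    simp only [funext Real.sqrt_eq_rpow]
    exact tendsto_rpow_atTop (by norm_num)
  have h1 : Tendsto (fun x : ℝ => Real.sqrt x * (ε * Real.sqrt x - 4)) atTop atTop := by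
    apply Filter.Tendsto.atTop_mul_atTop₀ hs
    exact tendsto_atTop_add_const_right _ (-4) (hs.const_mul_atTop hε)
  refine h1.congr' ?_
  filter_upwards [eventually_ge_atTop (0:ℝ)] with x hx
  have h : Real.sqrt x * Real.sqrt x = x := Real.mul_self_sqrt hx
  nlinarith [h]

/-- Salem–Spencer/Behrend. For every `ε > 0` there exists `M₀` such that for
every `M ≥ M₀` there is a subset `A ⊆ {0,…,M−1}` of size at least `M^{1−ε}` containing no
nontrivial three-term arithmetic progression modulo `M`. -/
theorem stmt1 (ε : ℝ) (hε : 0 < ε) :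
    ∃ M₀ : ℕ, ∀ M : ℕ, M₀ ≤ M →
      ∃ A : Finset ℕ, A ⊆ Finset.range M ∧ (M : ℝ) ^ (1 - ε) ≤ (A.card : ℝ) ∧
        ∀ a ∈ A, ∀ b ∈ A, ∀ c ∈ A, (a + c) % M = (2 * b) % M → a = b ∧ b = c := by
  have htd : Tendsto (fun M : ℕ => ε * Real.log M - 4 * Real.sqrt (Real.log M)) atTop atTop :=
    (aux_tendsto ε hε).comp (Real.tendsto_log_atTop.comp tendsto_natCast_atTop_atTop)
  obtain ⟨M₁, hM₁⟩ := (htd.eventually_ge_atTop (Real.log 4)).exists_forall_of_atTop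
  refine ⟨max M₁ 8192, fun M hM => ?_⟩
  have hM1 : M₁ ≤ M := le_trans (le_max_left _ _) hM
  have hM8 : 8192 ≤ M := le_trans (le_max_right _ _) hM
  set N := M / 2 with hN
  have hN4096 : 4096 ≤ N := by omega
  obtain ⟨A, hAsub, hAcard, hAfree⟩ := rothNumberNat_spec N
  have hMpos : (0:ℝ) < M := by
    have : (0:ℕ) < M := by omega
    exact_mod_cast this
  have hNpos : (0:ℝ) < N := by
    have : (0:ℕ) < N := by omega
    exact_mod_cast this
  -- size bound
  have hsize : (M : ℝ) ^ (1 - ε) ≤ (A.card : ℝ) := by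
    have hbeh : (N : ℝ) * Real.exp (-4 * Real.sqrt (Real.log N)) < rothNumberNat N :=
      Behrend.roth_lower_bound_explicit hN4096
    have key : (M : ℝ) ^ (1 - ε) ≤ (N : ℝ) * Real.exp (-4 * Real.sqrt (Real.log N)) := by
      set L := Real.log M with hL
      have hL1 : Real.log 4 ≤ ε * L - 4 * Real.sqrt L := hM₁ M hM1
      have hlogN : Real.log N ≤ L := by
        apply Real.log_le_log hNpos
        have : N ≤ M := by omega
        exact_mod_cast this
      have hsqrt : Real.sqrt (Real.log N) ≤ Real.sqrt L := Real.sqrt_le_sqrt hlogN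
      have hexp : Real.exp (-4 * Real.sqrt L) ≤ Real.exp (-4 * Real.sqrt (Real.log N)) := by
        apply Real.exp_le_exp.2; nlinarith
      have hN4 : (M:ℝ) / 4 ≤ (N:ℝ) := by
        have h2 : (M:ℝ) - 1 ≤ 2 * N := by
          have : M ≤ 2 * N + 1 := by omega
          have := (Nat.cast_le (α := ℝ)).2 this
          push_cast at this ⊢; linarith
        have hNbig : (1:ℝ) ≤ N := by
          have : (1:ℕ) ≤ N := by omega
          exact_mod_cast this
        linarith
      have step1 : (M : ℝ) ^ (1 - ε) ≤ (M:ℝ)/4 * Real.exp (-4 * Real.sqrt L) := by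
        rw [Real.rpow_def_of_pos hMpos]
        have hM4 : (M:ℝ)/4 = Real.exp (L - Real.log 4) := by
          rw [Real.exp_sub, Real.exp_log hMpos, Real.exp_log (by norm_num)]
        rw [hM4, ← Real.exp_add]
        apply Real.exp_le_exp.2
        nlinarith
      calc (M : ℝ) ^ (1 - ε) ≤ (M:ℝ)/4 * Real.exp (-4 * Real.sqrt L) := step1
        _ ≤ (N:ℝ) * Real.exp (-4 * Real.sqrt (Real.log N)) := by
            apply mul_le_mul hN4 hexp (Real.exp_pos _).le hNpos.le
    rw [hAcard]
    exact key.trans hbeh.le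
  refine ⟨A, ?_, hsize, ?_⟩
  · exact hAsub.trans (Finset.range_subset_range.2 (by omega))
  · intro a ha b hb c hc hmod
    have haN : a < N := Finset.mem_range.1 (hAsub ha)
    have hbN : b < N := Finset.mem_range.1 (hAsub hb)
    have hcN : c < N := Finset.mem_range.1 (hAsub hc)
    have hac : a + c < M := by omega
    have hb2 : 2 * b < M := by omega
    rw [Nat.mod_eq_of_lt hac, Nat.mod_eq_of_lt hb2] at hmod
    have : a = b := hAfree ha hb hc (by omega)
    omega
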